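/- Let J, R be n×n complex matrices with J skew-Hermitian, R Hermitian positive semi-definite, and rank[R, JR, …, J^{n-1}R] = n. Then there exist constants c ≥ 1 and μ > 0 such that ‖e^{(J-R)t} x₀‖ ≤ c e^{-μt} ‖x₀‖ for all x₀ ∈ ℂ^n and all t ≥ 0. -/

import Mathlib

open Matrix
open scoped ComplexOrder

/-- If `M *ᵥ v = z • v` then `M ^ k *ᵥ v = z ^ k • v`. -/
private lemma aux_pow_mulVec {n : ℕ} (M : Matrix (Fin n) (Fin n) ℂ) (v : Fin n → ℂ) (z : ℂ)
    (h : M *ᵥ v = z • v) (k : ℕ) : (M ^ k) *ᵥ v = z ^ k • v := by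
  induction k with
  | zero => simp
  | succ k ih =>
      rw [pow_succ', ← Matrix.mulVec_mulVec, ih, Matrix.mulVec_smul, h, smul_smul, ← pow_succ]

/-- Eigenvectors of `M` are eigenvectors of `exp M` with exponentiated eigenvalue. -/
private lemma aux_exp_mulVec {n : ℕ} (M : Matrix (Fin n) (Fin n) ℂ) (v : Fin n → ℂ) (z : ℂ)
    (h : M *ᵥ v = z • v) :
    (NormedSpace.exp M) *ᵥ v = Complex.exp z • v := by
  letI : SeminormedRing (Matrix (Fin n) (Fin n) ℂ) := Matrix.linftyOpSemiNormedRing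
  letI : NormedRing (Matrix (Fin n) (Fin n) ℂ) := Matrix.linftyOpNormedRing
  letI : NormedAlgebra ℂ (Matrix (Fin n) (Fin n) ℂ) := Matrix.linftyOpNormedAlgebra
  let φ : Matrix (Fin n) (Fin n) ℂ →ₗ[ℂ] (Fin n → ℂ) :=
    { toFun := fun N => N *ᵥ v
      map_add' := fun a b => Matrix.add_mulVec a b v
      map_smul' := fun c N => Matrix.smul_mulVec c N v }
  let φc := LinearMap.toContinuousLinearMap φ
  have key2 : (NormedSpace.exp M) *ᵥ v = Complex.exp z • v := by
    have e1 : NormedSpace.exp M = ∑' k : ℕ, ((k.factorial : ℂ))⁻¹ • M ^ k :=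
      congrFun (NormedSpace.exp_eq_tsum ℂ) M
    have hsum : Summable fun k : ℕ => ((k.factorial : ℂ))⁻¹ • M ^ k :=
      NormedSpace.expSeries_summable' (𝕂 := ℂ) M
    have e2 : φc (∑' k : ℕ, ((k.factorial : ℂ))⁻¹ • M ^ k)
        = ∑' k : ℕ, φc (((k.factorial : ℂ))⁻¹ • M ^ k) := φc.map_tsum hsum
    have e3 : ∀ k : ℕ, φc (((k.factorial : ℂ))⁻¹ • M ^ k)
        = (((k.factorial : ℂ))⁻¹ • z ^ k) • v := by
      intro k
      have : φc (((k.factorial : ℂ))⁻¹ • M ^ k)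
          = ((k.factorial : ℂ))⁻¹ • ((M ^ k) *ᵥ v) := by
        simp [φc, φ]
      rw [this, aux_pow_mulVec M v z h k, smul_smul, smul_eq_mul]
  -- sum of scalar coefficients
    have hsumc : Summable fun k : ℕ => ((k.factorial : ℂ))⁻¹ • z ^ k :=
      NormedSpace.expSeries_summable' (𝕂 := ℂ) (𝔸 := ℂ) z
    have e4 : ∑' k : ℕ, (((k.factorial : ℂ))⁻¹ • z ^ k) • v
        = (∑' k : ℕ, ((k.factorial : ℂ))⁻¹ • z ^ k) • v := Summable.tsum_smul_const hsumc v
    have e5 : (∑' k : ℕ, ((k.factorial : ℂ))⁻¹ • z ^ k) = Complex.exp z := by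
      rw [Complex.exp_eq_exp_ℂ]
      exact (congrFun (NormedSpace.exp_eq_tsum ℂ) z).symm
    calc (NormedSpace.exp M) *ᵥ v = φc (NormedSpace.exp M) := rfl
      _ = φc (∑' k : ℕ, ((k.factorial : ℂ))⁻¹ • M ^ k) := by rw [e1]
      _ = ∑' k : ℕ, φc (((k.factorial : ℂ))⁻¹ • M ^ k) := e2
      _ = ∑' k : ℕ, (((k.factorial : ℂ))⁻¹ • z ^ k) • v := by simp only [e3]
      _ = Complex.exp z • v := by rw [e4, e5]
  exact key2

/-- An element of the spectrum of a matrix is an eigenvalue. -/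
private lemma aux_spectrum_eig {n : ℕ} (M : Matrix (Fin n) (Fin n) ℂ) (z : ℂ)
    (hz : z ∈ spectrum ℂ M) : ∃ v, v ≠ 0 ∧ M *ᵥ v = z • v := by
  have h1 : ¬ IsUnit (algebraMap ℂ (Matrix (Fin n) (Fin n) ℂ) z - M) := spectrum.mem_iff.mp hz
  have h2 : (algebraMap ℂ (Matrix (Fin n) (Fin n) ℂ) z - M).det = 0 := by
    by_contra h
    exact h1 ((Matrix.isUnit_iff_isUnit_det _).mpr (isUnit_iff_ne_zero.mpr h))
  obtain ⟨v, hv0, hv⟩ := Matrix.exists_mulVec_eq_zero_iff.mpr h2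
  refine ⟨v, hv0, ?_⟩
  rw [Algebra.algebraMap_eq_smul_one, Matrix.sub_mulVec, Matrix.smul_mulVec,
    Matrix.one_mulVec] at hv
  exact (sub_eq_zero.mp hv).symm

/-- An eigenvalue (with eigenvector) is in the spectrum. -/
private lemma aux_eig_spectrum {n : ℕ} (M : Matrix (Fin n) (Fin n) ℂ) (z : ℂ)
    (v : Fin n → ℂ) (hv0 : v ≠ 0) (hv : M *ᵥ v = z • v) : z ∈ spectrum ℂ M := by
  rw [spectrum.mem_iff]
  intro hu
  have hdet : IsUnit (algebraMap ℂ (Matrix (Fin n) (Fin n) ℂ) z - M).det :=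
    (Matrix.isUnit_iff_isUnit_det _).mp hu
  have h0 : (algebraMap ℂ (Matrix (Fin n) (Fin n) ℂ) z - M).det = 0 := by
    apply Matrix.exists_mulVec_eq_zero_iff.mp
    refine ⟨v, hv0, ?_⟩
    rw [Algebra.algebraMap_eq_smul_one, Matrix.sub_mulVec, Matrix.smul_mulVec,
      Matrix.one_mulVec, hv, sub_self]
  rw [h0] at hdet
  exact hdet.ne_zero rfl

/-- Spectral mapping (one direction) for the matrix exponential. -/
private lemma aux_spec_exp {n : ℕ} (B : Matrix (Fin n) (Fin n) ℂ) (z : ℂ)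
    (hz : z ∈ spectrum ℂ (NormedSpace.exp B)) :
    ∃ l ∈ spectrum ℂ B, z = Complex.exp l := by
  obtain ⟨u, hu0, hu⟩ := aux_spectrum_eig _ z hz
  -- the eigenspace of `exp B` for `z`, as kernel
  set N : Matrix (Fin n) (Fin n) ℂ := NormedSpace.exp B - z • 1 with hN
  have hNu : N *ᵥ u = 0 := by
    rw [hN, Matrix.sub_mulVec, Matrix.smul_mulVec, Matrix.one_mulVec, hu, sub_self]
  set E : Submodule ℂ (Fin n → ℂ) := LinearMap.ker N.mulVecLin with hE
  have huE : u ∈ E := by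
    rw [hE, LinearMap.mem_ker, Matrix.mulVecLin_apply]; exact hNu
  have hcomm : N * B = B * N := by
    have h1 : Commute B (NormedSpace.exp B) := Commute.exp_right (Commute.refl B)
    have h2 : Commute B (z • (1 : Matrix (Fin n) (Fin n) ℂ)) := by
      simpa using (Commute.one_right B).smul_right z
    have : Commute B N := h1.sub_right h2
    exact this.symm
  have hinv : ∀ x ∈ E, B.mulVecLin x ∈ E := by
    intro x hx
    rw [hE, LinearMap.mem_ker, Matrix.mulVecLin_apply] at hx ⊢
    rw [Matrix.mulVecLin_apply, Matrix.mulVec_mulVec, hcomm, ← Matrix.mulVec_mulVec, hx,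
      Matrix.mulVec_zero]
  haveI : Nontrivial E := nontrivial_of_ne ⟨u, huE⟩ 0 (by
    intro hcon
    exact hu0 (by simpa using congrArg Subtype.val hcon))
  obtain ⟨l, hl⟩ := Module.End.exists_eigenvalue ((B.mulVecLin).restrict hinv)
  obtain ⟨w, hw⟩ := hl.exists_hasEigenvector
  have hBw : B *ᵥ (w : Fin n → ℂ) = l • (w : Fin n → ℂ) := by
    have h3 : (B.mulVecLin.restrict hinv) w = l • w := hw.apply_eq_smul
    rw [LinearMap.restrict_apply] at h3
    have h2 := congrArg Subtype.val h3
    simpa only [SetLike.val_smul, Matrix.mulVecLin_apply] using h2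
  have hwne : (w : Fin n → ℂ) ≠ 0 := by
    intro hcon
    exact hw.2 (by exact_mod_cast Subtype.ext hcon)
  have hzw : NormedSpace.exp B *ᵥ (w : Fin n → ℂ) = z • (w : Fin n → ℂ) := by
    have h4 : N *ᵥ (w : Fin n → ℂ) = 0 := by
      rw [← Matrix.mulVecLin_apply]
      exact LinearMap.mem_ker.mp w.2
    rw [hN, Matrix.sub_mulVec, Matrix.smul_mulVec, Matrix.one_mulVec, sub_eq_zero] at h4
    exact h4
  have hexpw : NormedSpace.exp B *ᵥ (w : Fin n → ℂ) = Complex.exp l • (w : Fin n → ℂ) :=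
    aux_exp_mulVec B _ l hBw
  obtain ⟨i, hi⟩ := Function.ne_iff.mp hwne
  have : z * (w : Fin n → ℂ) i = Complex.exp l * (w : Fin n → ℂ) i := by
    have := hzw.symm.trans hexpw
    have := congrFun this i
    simpa using this
  exact ⟨l, aux_eig_spectrum B l _ hwne hBw, mul_right_cancel₀ hi this⟩

/-- Under the hypotheses, every spectral value of `J - R` has negative real part. -/
private lemma aux_re_neg {n : ℕ} (J R : Matrix (Fin n) (Fin n) ℂ)
    (hJ : Jᴴ = -J) (hR : R.PosSemidef)
    (hrank : (Matrix.of fun (i : Fin n) (p : Fin n × Fin n) =>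
      (J ^ (p.1 : ℕ) * R) i p.2).rank = n) :
    ∀ z ∈ spectrum ℂ (J - R), z.re < 0 := by
  intro z hz
  obtain ⟨v, hv0, hv⟩ := aux_spectrum_eig _ z hz
  set d : ℂ := star v ⬝ᵥ v with hd
  have hdnn : 0 ≤ d := by
    rw [hd]
    exact Finset.sum_nonneg fun i _ => star_mul_self_nonneg (v i)
  have hdne : d ≠ 0 := by
    rw [hd]
    simpa using (dotProduct_star_self_eq_zero (v := v)).ne.mpr hv0
  have hdre : 0 < d.re := by
    rcases Complex.le_def.mp hdnn with ⟨h1, h2⟩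
    rcases lt_or_eq_of_le h1 with h | h
    · simpa using h
    · exfalso; exact hdne (Complex.ext h.symm h2.symm ▸ rfl)
  have hdim : d.im = 0 := (Complex.le_def.mp hdnn).2.symm
  set a : ℂ := star v ⬝ᵥ (J *ᵥ v) with ha
  set r : ℂ := star v ⬝ᵥ (R *ᵥ v) with hr
  have hsplit : a - r = z * d := by
    rw [ha, hr, ← dotProduct_sub, ← Matrix.sub_mulVec, hv, dotProduct_smul,
      smul_eq_mul, hd]
  have hare : a.re = 0 := by
    have h1 : star a = -a := by
      calc star a = star (star (star (J *ᵥ v) ⬝ᵥ v)) := by rw [ha, Matrix.star_dotProduct]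
        _ = star (J *ᵥ v) ⬝ᵥ v := star_star _
        _ = (star v ᵥ* Jᴴ) ⬝ᵥ v := by rw [Matrix.star_mulVec]
        _ = (star v ᵥ* (-J)) ⬝ᵥ v := by rw [hJ]
        _ = (-(star v ᵥ* J)) ⬝ᵥ v := by rw [Matrix.vecMul_neg]
        _ = -((star v ᵥ* J) ⬝ᵥ v) := by rw [neg_dotProduct]
        _ = -(star v ⬝ᵥ (J *ᵥ v)) := by rw [← Matrix.dotProduct_mulVec]
        _ = -a := by rw [ha]
    have := congrArg Complex.re h1
    simp only [Complex.star_def, Complex.conj_re, Complex.neg_re] at this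
    linarith
  have hrle := hR.dotProduct_mulVec_nonneg v
  have hrre : 0 ≤ r.re := (Complex.le_def.mp hrle).1
  have hrim : r.im = 0 := (Complex.le_def.mp hrle).2.symm
  -- real part computation
  have hkey : z.re * d.re = -r.re := by
    have := congrArg Complex.re hsplit
    simp only [Complex.sub_re, Complex.mul_re, hdim, hare, mul_zero, sub_zero] at this
    linarith
  have hzle : z.re ≤ 0 := by nlinarith
  rcases lt_or_eq_of_le hzle with h | h
  · exact h
  exfalso
  -- z.re = 0 : then r = 0 and R v = 0
  have hrre0 : r.re = 0 := by nlinarith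
  have hr0 : r = 0 := Complex.ext hrre0 hrim
  have hRv : R *ᵥ v = 0 := (hR.dotProduct_mulVec_zero_iff v).mp (by rw [← hr]; exact hr0)
  have hJv : J *ᵥ v = z • v := by
    have := hv
    rw [Matrix.sub_mulVec, hRv, sub_zero] at this
    exact this
  -- v annihilates the Kalman matrix from the left
  set K : Matrix (Fin n) (Fin n × Fin n) ℂ :=
    Matrix.of (fun (i : Fin n) (p : Fin n × Fin n) => (J ^ (p.1 : ℕ) * R) i p.2) with hK
  have hvR : star v ᵥ* R = 0 := by
    have h1 : star (R *ᵥ v) = star v ᵥ* Rᴴ := Matrix.star_mulVec _ _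
    rw [hRv, star_zero, hR.1] at h1
    exact h1.symm
  have hnegJ : ∀ k : ℕ, star v ᵥ* (J ^ k) = star ((-z) ^ k) • star v := by
    intro k
    have h1 : (-J) *ᵥ v = (-z) • v := by rw [Matrix.neg_mulVec, hJv, neg_smul, ← neg_smul]
    have h2 : ((-J) ^ k) *ᵥ v = (-z) ^ k • v := aux_pow_mulVec (-J) v (-z) h1 k
    have h3 : (J ^ k)ᴴ = (-J) ^ k := by rw [Matrix.conjTranspose_pow, hJ]
    calc star v ᵥ* (J ^ k) = star v ᵥ* ((J ^ k)ᴴ)ᴴ := by rw [Matrix.conjTranspose_conjTranspose]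
      _ = star ((J ^ k)ᴴ *ᵥ v) := (Matrix.star_mulVec _ _).symm
      _ = star ((-J) ^ k *ᵥ v) := by rw [h3]
      _ = star ((-z) ^ k • v) := by rw [h2]
      _ = star ((-z) ^ k) • star v := star_smul _ _
  have hKvm : star v ᵥ* K = 0 := by
    funext p
    have h1 : (star v ᵥ* K) p = (star v ᵥ* (J ^ (p.1 : ℕ) * R)) p.2 := by
      simp [Matrix.vecMul, dotProduct, hK]
    rw [h1, ← Matrix.vecMul_vecMul, hnegJ, Matrix.smul_vecMul, hvR, smul_zero]
    rfl
  have hKT : Kᵀ *ᵥ (star v) = 0 := by rw [Matrix.mulVec_transpose, hKvm]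
  -- rank contradiction
  have hrankT : Kᵀ.rank = n := by rw [Matrix.rank_transpose]; exact hrank
  have hker : star v ∈ LinearMap.ker (Kᵀ.mulVecLin) := by
    rw [LinearMap.mem_ker, Matrix.mulVecLin_apply]; exact hKT
  have hfr := LinearMap.finrank_range_add_finrank_ker (Kᵀ.mulVecLin)
  have hdom : Module.finrank ℂ (Fin n → ℂ) = n := by simp
  have hrange : Module.finrank ℂ (LinearMap.range (Kᵀ.mulVecLin)) = n := hrankT
  have hker0 : Module.finrank ℂ (LinearMap.ker (Kᵀ.mulVecLin)) = 0 := by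
    rw [hdom, hrange] at hfr
    omega
  have : LinearMap.ker (Kᵀ.mulVecLin) = ⊥ := Submodule.finrank_eq_zero.mp hker0
  rw [this, Submodule.mem_bot] at hker
  exact hv0 (by simpa using congrArg star hker)

/-- Under the Kalman rank condition `rank [R, JR, …, J^{n-1}R] = n`, the semigroup
`e^{(J-R)t}` decays exponentially in the Euclidean norm: there are `c ≥ 1`, `μ > 0` with
`‖e^{(J-R)t} x₀‖ ≤ c e^{-μt} ‖x₀‖` for all `x₀` and `t ≥ 0`. -/
theorem stmt_18 (n : ℕ) (J R : Matrix (Fin n) (Fin n) ℂ)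
    (hJ : Jᴴ = -J) (hR : R.PosSemidef)
    (hrank : (Matrix.of fun (i : Fin n) (p : Fin n × Fin n) =>
      (J ^ (p.1 : ℕ) * R) i p.2).rank = n) :
    ∃ (c : ℝ) (μ : ℝ), 1 ≤ c ∧ 0 < μ ∧
      ∀ (x₀ : Fin n → ℂ) (t : ℝ), 0 ≤ t →
        ‖(WithLp.equiv 2 (Fin n → ℂ)).symm ((NormedSpace.exp (t • (J - R))) *ᵥ x₀)‖ ≤
          c * Real.exp (-μ * t) * ‖(WithLp.equiv 2 (Fin n → ℂ)).symm x₀‖ := by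
  rcases Nat.eq_zero_or_pos n with rfl | hn
  · refine ⟨1, 1, le_refl 1, one_pos, fun x₀ t ht => ?_⟩
    have h1 : (WithLp.equiv 2 (Fin 0 → ℂ)).symm ((NormedSpace.exp (t • (J - R))) *ᵥ x₀) = 0 := by
      ext i; exact i.elim0
    have h2 : (WithLp.equiv 2 (Fin 0 → ℂ)).symm x₀ = 0 := by ext i; exact i.elim0
    rw [h1, h2]
    simp [Real.exp_nonneg]
  · haveI : Nonempty (Fin n) := Fin.pos_iff_nonempty.mp hn
    letI : SeminormedRing (Matrix (Fin n) (Fin n) ℂ) := Matrix.linftyOpSemiNormedRing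
    letI : NormedRing (Matrix (Fin n) (Fin n) ℂ) := Matrix.linftyOpNormedRing
    letI : NormedAlgebra ℂ (Matrix (Fin n) (Fin n) ℂ) := Matrix.linftyOpNormedAlgebra
    letI : NormedAlgebra ℚ (Matrix (Fin n) (Fin n) ℂ) := Matrix.linftyOpNormedAlgebra
    have H : ∃ (c : ℝ) (μ : ℝ), 1 ≤ c ∧ 0 < μ ∧
        ∀ (x₀ : Fin n → ℂ) (t : ℝ), 0 ≤ t →
          ‖(WithLp.equiv 2 (Fin n → ℂ)).symm ((NormedSpace.exp (t • (J - R))) *ᵥ x₀)‖ ≤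
            c * Real.exp (-μ * t) * ‖(WithLp.equiv 2 (Fin n → ℂ)).symm x₀‖ := by
      set A : Matrix (Fin n) (Fin n) ℂ := J - R with hA
      have hspec : ∀ z ∈ spectrum ℂ A, z.re < 0 := aux_re_neg J R hJ hR hrank
      have hfin : (spectrum ℂ A).Finite := Matrix.finite_spectrum A
      set T : Set ℝ := insert (-1) (Complex.re '' spectrum ℂ A) with hT
      have hTfin : T.Finite := ((hfin.image _).insert _)
      have hTne : T.Nonempty := ⟨-1, Set.mem_insert _ _⟩
      set m : ℝ := sSup T with hm
      have hmT : m ∈ T := hTne.csSup_mem hTfin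
      have hmneg : m < 0 := by
        rcases hmT with h | ⟨zz, hzz, hzre⟩
        · norm_num [h]
        · exact hzre ▸ hspec zz hzz
      have hle : ∀ z ∈ spectrum ℂ A, z.re ≤ m :=
        fun z hz => le_csSup hTfin.bddAbove (Set.mem_insert_of_mem _ ⟨z, hz, rfl⟩)
      set μ : ℝ := -m / 2 with hμ
      have hμpos : 0 < μ := by rw [hμ]; linarith
      set B : Matrix (Fin n) (Fin n) ℂ := A + (μ : ℂ) • 1 with hB
      have hBspec : ∀ w ∈ spectrum ℂ B, w.re ≤ -μ := by
        intro w hw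
        have h1 : w - (μ : ℂ) ∈ spectrum ℂ A := by
          rw [spectrum.mem_iff] at hw ⊢
          intro hU
          apply hw
          have heq : algebraMap ℂ (Matrix (Fin n) (Fin n) ℂ) w - B
              = algebraMap ℂ (Matrix (Fin n) (Fin n) ℂ) (w - (μ : ℂ)) - A := by
            rw [Algebra.algebraMap_eq_smul_one, Algebra.algebraMap_eq_smul_one, hB]
            module
          rw [heq]
          exact hU
        have h2 := hle _ h1
        have h3 : (w - (μ : ℂ)).re = w.re - μ := by simp
        rw [h3] at h2
        rw [hμ] at *
        linarith
      -- powers of exp B are bounded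
      set Mx : Matrix (Fin n) (Fin n) ℂ := NormedSpace.exp B with hMx
      have hMspec : ∀ u ∈ spectrum ℂ Mx, ‖u‖ ≤ Real.exp (-μ) := by
        intro u hu
        obtain ⟨l, hl, rfl⟩ := aux_spec_exp B u hu
        rw [Complex.norm_exp]
        exact Real.exp_le_exp.mpr (hBspec l hl)
      have hsr : spectralRadius ℂ Mx ≤ ENNReal.ofReal (Real.exp (-μ)) := by
        show (⨆ u ∈ spectrum ℂ Mx, (‖u‖₊ : ENNReal)) ≤ ENNReal.ofReal (Real.exp (-μ))
        refine iSup₂_le fun u hu => ?_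
        rw [← ENNReal.ofReal_coe_nnreal, coe_nnnorm]
        exact ENNReal.ofReal_le_ofReal (hMspec u hu)
      set r' : ℝ := (Real.exp (-μ) + 1) / 2 with hr'
      have hexpmu : Real.exp (-μ) < 1 := Real.exp_lt_one_iff.mpr (by linarith)
      have hr'0 : 0 < r' := by rw [hr']; positivity
      have hr'1 : r' < 1 := by rw [hr']; linarith
      have hrr' : Real.exp (-μ) < r' := by rw [hr']; linarith
      have hlt : spectralRadius ℂ Mx < ENNReal.ofReal r' :=
        lt_of_le_of_lt hsr ((ENNReal.ofReal_lt_ofReal_iff hr'0).mpr hrr')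
      have hev : ∀ᶠ k : ℕ in Filter.atTop,
          ENNReal.ofReal (‖Mx ^ k‖ ^ (1 / (k : ℝ))) < ENNReal.ofReal r' :=
        (spectrum.pow_norm_pow_one_div_tendsto_nhds_spectralRadius Mx).eventually_lt_const hlt
      obtain ⟨N0, hN0⟩ := Filter.eventually_atTop.mp (hev.and (Filter.eventually_ge_atTop 1))
      have hpow1 : ∀ k, N0 + 1 ≤ k → ‖Mx ^ k‖ ≤ 1 := by
        intro k hk
        obtain ⟨hk1, hk2⟩ := hN0 k (by omega)
        have h5 : ‖Mx ^ k‖ ^ (1 / (k : ℝ)) < r' :=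
          (ENNReal.ofReal_lt_ofReal_iff hr'0).mp hk1
        have hknz : (k : ℝ) ≠ 0 := Nat.cast_ne_zero.mpr (by omega)
        have hx0 : (0 : ℝ) ≤ ‖Mx ^ k‖ := norm_nonneg _
        have h6 : (‖Mx ^ k‖ ^ (1 / (k : ℝ))) ^ (k : ℕ) = ‖Mx ^ k‖ := by
          rw [← Real.rpow_natCast (‖Mx ^ k‖ ^ (1 / (k : ℝ))) k, ← Real.rpow_mul hx0,
            one_div, inv_mul_cancel₀ hknz, Real.rpow_one]
        calc ‖Mx ^ k‖ = (‖Mx ^ k‖ ^ (1 / (k : ℝ))) ^ (k : ℕ) := h6.symm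
          _ ≤ r' ^ (k : ℕ) := pow_le_pow_left₀ (Real.rpow_nonneg hx0 _) h5.le k
          _ ≤ 1 := pow_le_one₀ hr'0.le hr'1.le
      set C0 : ℝ := (∑ j ∈ Finset.range (N0 + 1), ‖Mx ^ j‖) + 1 with hC0def
      have hsum0 : (0 : ℝ) ≤ ∑ j ∈ Finset.range (N0 + 1), ‖Mx ^ j‖ :=
        Finset.sum_nonneg fun j _ => norm_nonneg _
      have hC0 : ∀ k, ‖Mx ^ k‖ ≤ C0 := by
        intro k
        by_cases hk : k < N0 + 1
        · have h7 : ‖Mx ^ k‖ ≤ ∑ j ∈ Finset.range (N0 + 1), ‖Mx ^ j‖ :=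
            Finset.single_le_sum (f := fun j => ‖Mx ^ j‖) (fun j _ => norm_nonneg _)
              (Finset.mem_range.mpr hk)
          rw [hC0def]; linarith
        · have h8 := hpow1 k (by omega)
          rw [hC0def]; linarith
      have hC0nn : (0 : ℝ) ≤ C0 := le_trans (norm_nonneg (Mx ^ 0)) (hC0 0)
      -- bound for exp (s • B), s ∈ [0,1]
      obtain ⟨Cr, hCr⟩ := (isCompact_Icc (a := (0 : ℝ)) (b := 1)).exists_bound_of_continuousOn
        (f := fun s : ℝ => NormedSpace.exp (s • B))
        ((NormedSpace.exp_continuous.comp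
          (continuous_id.smul continuous_const)).continuousOn)
      have hCr0 : (0 : ℝ) ≤ Cr :=
        le_trans (norm_nonneg _) (hCr 0 ⟨le_refl 0, zero_le_one⟩)
      have hexpB : ∀ t : ℝ, 0 ≤ t → ‖NormedSpace.exp (t • B)‖ ≤ C0 * Cr := by
        intro t ht
        have hs0 : (0 : ℝ) ≤ t - (⌊t⌋₊ : ℝ) := sub_nonneg.mpr (Nat.floor_le ht)
        have hs1 : t - (⌊t⌋₊ : ℝ) ≤ 1 := by
          have := Nat.lt_floor_add_one t
          linarith
        have hsplit : t • B = (⌊t⌋₊ • B) + ((t - (⌊t⌋₊ : ℝ)) • B) := by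
          rw [← Nat.cast_smul_eq_nsmul ℝ, ← add_smul]
          congr 1
          ring
        have hcomm : Commute ((⌊t⌋₊ : ℕ) • B) ((t - (⌊t⌋₊ : ℝ)) • B) :=
          ((Commute.refl B).smul_left _).smul_right _
        have h9 : NormedSpace.exp (t • B)
            = Mx ^ ⌊t⌋₊ * NormedSpace.exp ((t - (⌊t⌋₊ : ℝ)) • B) := by
          rw [hsplit, Matrix.exp_add_of_commute _ _ hcomm, Matrix.exp_nsmul, hMx]
        rw [h9]
        calc ‖Mx ^ ⌊t⌋₊ * NormedSpace.exp ((t - (⌊t⌋₊ : ℝ)) • B)‖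
            ≤ ‖Mx ^ ⌊t⌋₊‖ * ‖NormedSpace.exp ((t - (⌊t⌋₊ : ℝ)) • B)‖ := norm_mul_le _ _
          _ ≤ C0 * Cr := mul_le_mul (hC0 _) (hCr _ ⟨hs0, hs1⟩) (norm_nonneg _) hC0nn
      -- relate exp (t • A) and exp (t • B)
      have hAB : ∀ t : ℝ, NormedSpace.exp (t • A)
          = Complex.exp (-(((t * μ : ℝ)) : ℂ)) • NormedSpace.exp (t • B) := by
        intro t
        have h1 : t • B = t • A + (((t * μ : ℝ)) : ℂ) • (1 : Matrix (Fin n) (Fin n) ℂ) := by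
          rw [hB, smul_add]
          congr 1
          rw [← smul_assoc]
          congr 1
          rw [Complex.real_smul]
          push_cast
          ring
        have hcomm2 : Commute (t • A) ((((t * μ : ℝ)) : ℂ) • (1 : Matrix (Fin n) (Fin n) ℂ)) :=
          (Commute.one_right (t • A)).smul_right _
        have h3 : NormedSpace.exp ((((t * μ : ℝ)) : ℂ) • (1 : Matrix (Fin n) (Fin n) ℂ))
            = Complex.exp (((t * μ : ℝ)) : ℂ) • (1 : Matrix (Fin n) (Fin n) ℂ) := by
          rw [← Matrix.diagonal_one, ← Matrix.diagonal_smul, Matrix.exp_diagonal,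
            ← Matrix.diagonal_smul]
          congr 1
          ext i
          simp [Complex.exp_eq_exp_ℂ]
        have h4 : NormedSpace.exp (t • B)
            = Complex.exp (((t * μ : ℝ)) : ℂ) • NormedSpace.exp (t • A) := by
          rw [h1, Matrix.exp_add_of_commute _ _ hcomm2, h3, mul_smul_comm, mul_one]
        rw [h4, smul_smul, ← Complex.exp_add, neg_add_cancel, Complex.exp_zero, one_smul]
      have hAt : ∀ t : ℝ, 0 ≤ t →
          ‖NormedSpace.exp (t • A)‖ ≤ Real.exp (-μ * t) * (C0 * Cr) := by
        intro t ht
        rw [hAB t, norm_smul]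
        have hnorm : ‖Complex.exp (-(((t * μ : ℝ)) : ℂ))‖ = Real.exp (-μ * t) := by
          rw [Complex.norm_exp]
          congr 1
          simp
          ring
        rw [hnorm]
        exact mul_le_mul_of_nonneg_left (hexpB t ht) (Real.exp_nonneg _)
      -- transfer to the Euclidean norm
      let ψ : Matrix (Fin n) (Fin n) ℂ →ₗ[ℂ]
          (EuclideanSpace ℂ (Fin n) →L[ℂ] EuclideanSpace ℂ (Fin n)) :=
        (LinearMap.toContinuousLinearMap :
            (EuclideanSpace ℂ (Fin n) →ₗ[ℂ] EuclideanSpace ℂ (Fin n)) ≃ₗ[ℂ]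
              (EuclideanSpace ℂ (Fin n) →L[ℂ] EuclideanSpace ℂ (Fin n))).toLinearMap ∘ₗ
          (Matrix.toEuclideanLin :
            Matrix (Fin n) (Fin n) ℂ ≃ₗ[ℂ]
              (EuclideanSpace ℂ (Fin n) →ₗ[ℂ] EuclideanSpace ℂ (Fin n))).toLinearMap
      let ψc := LinearMap.toContinuousLinearMap ψ
      letI : Norm (Matrix (Fin n) (Fin n) ℂ →L[ℂ]
          (EuclideanSpace ℂ (Fin n) →L[ℂ] EuclideanSpace ℂ (Fin n))) := ContinuousLinearMap.hasOpNorm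
      have hψap : ∀ (Mz : Matrix (Fin n) (Fin n) ℂ) (x₀ : Fin n → ℂ),
          (ψc Mz) ((WithLp.equiv 2 (Fin n → ℂ)).symm x₀)
            = (WithLp.equiv 2 (Fin n → ℂ)).symm (Mz *ᵥ x₀) := fun _ _ => rfl
      refine ⟨max 1 (‖ψc‖ * (C0 * Cr)), μ, le_max_left _ _, hμpos, ?_⟩
      intro x₀ t ht
      have hb1 : ‖(WithLp.equiv 2 (Fin n → ℂ)).symm ((NormedSpace.exp (t • A)) *ᵥ x₀)‖
          ≤ ‖ψc‖ * ‖NormedSpace.exp (t • A)‖ * ‖(WithLp.equiv 2 (Fin n → ℂ)).symm x₀‖ := by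
        rw [← hψap]
        exact le_trans ((ψc (NormedSpace.exp (t • A))).le_opNorm _)
          (mul_le_mul_of_nonneg_right (ψc.le_opNorm _) (norm_nonneg _))
      refine le_trans hb1 ?_
      have h2 := hAt t ht
      calc ‖ψc‖ * ‖NormedSpace.exp (t • A)‖ * ‖(WithLp.equiv 2 (Fin n → ℂ)).symm x₀‖
          ≤ ‖ψc‖ * (Real.exp (-μ * t) * (C0 * Cr)) * ‖(WithLp.equiv 2 (Fin n → ℂ)).symm x₀‖ := by
            gcongr
            exact ψc.opNorm_nonneg
        _ = (‖ψc‖ * (C0 * Cr)) * Real.exp (-μ * t) * ‖(WithLp.equiv 2 (Fin n → ℂ)).symm x₀‖ := by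
            ring
        _ ≤ max 1 (‖ψc‖ * (C0 * Cr)) * Real.exp (-μ * t)
              * ‖(WithLp.equiv 2 (Fin n → ℂ)).symm x₀‖ := by
            gcongr
            exact le_max_right _ _
    exact H
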